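/- Let G be a finite set and let I : ℝ^G → ℝ^G be a Lipschitz map (with respect to the sup norm on ℝ^G) satisfying the global comparison property. Then every linear map L belonging to the full Clarke differential 𝒟I of I also satisfies the global comparison property; that is, whenever φ : G → ℝ satisfies φ ≤ 0 on G and φ(x₀) = 0, then L(φ)(x₀) ≤ 0. -/

import Mathlib

open Filter Topology

noncomputable section

variable {G : Type*} [Fintype G]

/-- the set of limits of Fréchet derivatives of `I` along sequences converging to `u` -/
def clarkeLimits (I : (G → ℝ) → (G → ℝ)) (u : G → ℝ) :
    Set ((G → ℝ) →L[ℝ] (G → ℝ)) :=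
  {L | ∃ f : ℕ → G → ℝ, (∀ n, DifferentiableAt ℝ I (f n)) ∧
        Tendsto f atTop (nhds u) ∧
        Tendsto (fun n => fderiv ℝ I (f n)) atTop (nhds L)}

/-- the Clarke differential of `I` at `u` -/
def clarkeDiffAt (I : (G → ℝ) → (G → ℝ)) (u : G → ℝ) :
    Set ((G → ℝ) →L[ℝ] (G → ℝ)) :=
  closure (convexHull ℝ (clarkeLimits I u))

/-- the full Clarke differential of `I` -/
def clarkeDiff (I : (G → ℝ) → (G → ℝ)) : Set ((G → ℝ) →L[ℝ] (G → ℝ)) :=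
  closure (convexHull ℝ (⋃ u : G → ℝ, clarkeDiffAt I u))
/-- the key lemma: a Fréchet derivative of a GCP map satisfies GCP -/
lemma fderiv_GCP {G : Type*} [Fintype G]
    (I : (G → ℝ) → (G → ℝ))
    (hGCP : ∀ u v : G → ℝ, (∀ y, u y ≤ v y) → ∀ x, u x = v x → I u x ≤ I v x)
    (u : G → ℝ) (h : DifferentiableAt ℝ I u)
    (φ : G → ℝ) (hφ : ∀ y, φ y ≤ 0) (x₀ : G) (hx₀ : φ x₀ = 0) :
    fderiv ℝ I u φ x₀ ≤ 0 := by
  have hF := h.hasFDerivAt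
  have hcurve : HasDerivAt (fun t : ℝ => u + t • φ) φ 0 :=
    by simpa using ((hasDerivAt_id (0:ℝ)).smul_const φ).const_add u
  have hcomp : HasDerivAt (fun t : ℝ => I (u + t • φ)) (fderiv ℝ I u φ) 0 := by
    have h0 : u + (0:ℝ) • φ = u := by simp
    have := HasFDerivAt.comp_hasDerivAt (x := (0:ℝ)) (h0 ▸ hF) hcurve
    rw [h0] at this
    exact this
  have hg : HasDerivAt (fun t : ℝ => I (u + t • φ) x₀) (fderiv ℝ I u φ x₀) 0 :=
    (hasDerivAt_pi.mp hcomp) x₀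
  -- difference quotient is ≤ 0 for t > 0
  set g : ℝ → ℝ := fun t => I (u + t • φ) x₀ with hgdef
  have hmono : ∀ t : ℝ, 0 ≤ t → g t ≤ g 0 := by
    intro t ht
    have hle : ∀ y, (u + t • φ) y ≤ u y := by
      intro y
      have : t * φ y ≤ 0 := mul_nonpos_of_nonneg_of_nonpos ht (hφ y)
      simpa [Pi.add_apply] using add_le_of_nonpos_right (a := u y) this
    have heq : (u + t • φ) x₀ = u x₀ := by simp [hx₀]
    have := hGCP (u + t • φ) u hle x₀ heq
    simpa [hgdef] using this
  have hslope : Tendsto (slope g 0) (𝓝[>] 0) (𝓝 (fderiv ℝ I u φ x₀)) :=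
    (hasDerivAt_iff_tendsto_slope.mp hg).mono_left
      (nhdsWithin_mono 0 (fun t ht => ne_of_gt ht))
  refine le_of_tendsto hslope ?_
  filter_upwards [self_mem_nhdsWithin] with t ht
  have ht' : (0:ℝ) < t := ht
  have : g t - g 0 ≤ 0 := sub_nonpos.mpr (hmono t ht'.le)
  have : slope g 0 t = (g t - g 0) / t := by simp [slope_def_field, div_eq_inv_mul]
  rw [this]
  exact div_nonpos_of_nonpos_of_nonneg (sub_nonpos.mpr (hmono t ht'.le)) ht'.le

theorem clarkeDiff_GCP (G : Type*) [Fintype G] [Nonempty G]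
    (I : (G → ℝ) → (G → ℝ)) (K₀ : NNReal) (hLip : LipschitzWith K₀ I)
    (hGCP : ∀ u v : G → ℝ, (∀ y, u y ≤ v y) → ∀ x, u x = v x → I u x ≤ I v x) :
    ∀ L ∈ clarkeDiff I, ∀ φ : G → ℝ, (∀ y, φ y ≤ 0) → ∀ x₀ : G, φ x₀ = 0 →
      L φ x₀ ≤ 0 := by
  set S : Set ((G → ℝ) →L[ℝ] (G → ℝ)) :=
    {L | ∀ φ : G → ℝ, (∀ y, φ y ≤ 0) → ∀ x₀ : G, φ x₀ = 0 → L φ x₀ ≤ 0} with hS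
  have hclosed : IsClosed S := by
    have : S = ⋂ (φ : G → ℝ), ⋂ (_ : ∀ y, φ y ≤ 0), ⋂ (x₀ : G), ⋂ (_ : φ x₀ = 0),
        {L : (G → ℝ) →L[ℝ] (G → ℝ) | L φ x₀ ≤ 0} := by
      ext L; simp [hS]
    rw [this]
    refine isClosed_iInter fun φ => isClosed_iInter fun hφ =>
      isClosed_iInter fun x₀ => isClosed_iInter fun hx₀ => ?_
    have hc : Continuous fun L : (G → ℝ) →L[ℝ] (G → ℝ) => L φ x₀ :=
      (continuous_apply x₀).comp (ContinuousLinearMap.apply ℝ (G → ℝ) φ).continuous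
    exact isClosed_le hc continuous_const
  have hconv : Convex ℝ S := by
    intro L₁ h₁ L₂ h₂ a b ha hb hab
    intro φ hφ x₀ hx₀
    have : (a • L₁ + b • L₂) φ x₀ = a * L₁ φ x₀ + b * L₂ φ x₀ := by
      simp [ContinuousLinearMap.add_apply, ContinuousLinearMap.smul_apply]
    rw [this]
    have := add_nonpos (mul_nonpos_of_nonneg_of_nonpos ha (h₁ φ hφ x₀ hx₀))
      (mul_nonpos_of_nonneg_of_nonpos hb (h₂ φ hφ x₀ hx₀))
    linarith
  have hlim : ∀ u : G → ℝ, clarkeLimits I u ⊆ S := by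
    rintro u L ⟨f, hdiff, _, htend⟩
    refine hclosed.mem_of_tendsto htend (Eventually.of_forall fun n => ?_)
    intro φ hφ x₀ hx₀
    exact fderiv_GCP I hGCP (f n) (hdiff n) φ hφ x₀ hx₀
  have hAt : ∀ u : G → ℝ, clarkeDiffAt I u ⊆ S := fun u =>
    closure_minimal (convexHull_min (hlim u) hconv) hclosed
  have hfull : clarkeDiff I ⊆ S :=
    closure_minimal (convexHull_min (Set.iUnion_subset hAt) hconv) hclosed
  exact fun L hL => hfull hL

end
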